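/- arXiv:1601.02724 — 2 statements merged into one kernel-verified Lean document; each statement's English description precedes it below -/
import Mathlib

section
/- Let X = (x, y, z) : ℝ → ℝ³ be a solution of the 1-1-1 ABC flow system and let t₀ ∈ ℝ satisfy x(t₀) = 0 and z(t₀) = π/2. Then for every t ∈ ℝ one has x(2t₀ - t) = -x(t), y(2t₀ - t) = y(t), and z(2t₀ - t) = π - z(t). -/
open Real Set Filter

/-- A solution of the 1-1-1 ABC flow system. -/
def IsABCSol (x y z : ℝ → ℝ) : Prop :=
  ∀ t : ℝ,
    HasDerivAt x (Real.sin (z t) + Real.cos (y t)) t ∧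
    HasDerivAt y (Real.sin (x t) + Real.cos (z t)) t ∧
    HasDerivAt z (Real.sin (y t) + Real.cos (x t)) t

/-- The ABC vector field on `ℝ × ℝ × ℝ`. -/
noncomputable def abcField (p : ℝ × ℝ × ℝ) : ℝ × ℝ × ℝ :=
  (Real.sin p.2.2 + Real.cos p.2.1, Real.sin p.1 + Real.cos p.2.2,
    Real.sin p.2.1 + Real.cos p.1)

lemma abc_key (a c b d : ℝ) :
    |Real.sin a + Real.cos b - (Real.sin c + Real.cos d)| ≤ |a - c| + |b - d| := by
  have hsin : LipschitzWith 1 Real.sin := by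
    apply lipschitzWith_of_nnnorm_deriv_le Real.differentiable_sin
    intro x
    rw [Real.deriv_sin]
    rw [← NNReal.coe_le_coe, coe_nnnorm, NNReal.coe_one, Real.norm_eq_abs]; exact Real.abs_cos_le_one x
  have hcos : LipschitzWith 1 Real.cos := by
    apply lipschitzWith_of_nnnorm_deriv_le Real.differentiable_cos
    intro x
    rw [Real.deriv_cos]
    rw [← NNReal.coe_le_coe, coe_nnnorm, NNReal.coe_one, Real.norm_eq_abs, abs_neg]; exact Real.abs_sin_le_one x
  have h1 : |Real.sin a - Real.sin c| ≤ |a - c| := by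
    have := hsin.dist_le_mul a c
    simpa [Real.dist_eq] using this
  have h2 : |Real.cos b - Real.cos d| ≤ |b - d| := by
    have := hcos.dist_le_mul b d
    simpa [Real.dist_eq] using this
  have he : Real.sin a + Real.cos b - (Real.sin c + Real.cos d)
      = (Real.sin a - Real.sin c) + (Real.cos b - Real.cos d) := by ring
  rw [he]
  exact le_trans (abs_add_le _ _) (add_le_add h1 h2)

lemma abcField_lip : LipschitzWith 2 abcField := by
  apply LipschitzWith.of_dist_le_mul
  intro p q
  simp only [Prod.dist_eq, Real.dist_eq, abcField]
  set D := max |p.1 - q.1| (max |p.2.1 - q.2.1| |p.2.2 - q.2.2|) with hD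
  have h1 : |p.1 - q.1| ≤ D := le_max_left _ _
  have h2 : |p.2.1 - q.2.1| ≤ D := le_trans (le_max_left _ _) (le_max_right _ _)
  have h3 : |p.2.2 - q.2.2| ≤ D := le_trans (le_max_right _ _) (le_max_right _ _)
  have hc : ((2 : NNReal) : ℝ) = 2 := by norm_num
  rw [hc]
  refine max_le ?_ (max_le ?_ ?_)
  · exact le_trans (abc_key _ _ _ _) (by linarith)
  · exact le_trans (abc_key _ _ _ _) (by linarith)
  · exact le_trans (abc_key _ _ _ _) (by linarith)

theorem stmt16 (x y z : ℝ → ℝ) (h : IsABCSol x y z) (t₀ : ℝ)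
    (hx : x t₀ = 0) (hz : z t₀ = π / 2) :
    ∀ t : ℝ, x (2 * t₀ - t) = -x t ∧ y (2 * t₀ - t) = y t ∧
      z (2 * t₀ - t) = π - z t := by
  set σ : ℝ → ℝ := fun t => 2 * t₀ - t with hσ
  set f : ℝ → ℝ × ℝ × ℝ := fun t => (x t, y t, z t) with hf
  set g : ℝ → ℝ × ℝ × ℝ := fun t => (-x (σ t), y (σ t), π - z (σ t)) with hg
  have hσ' : ∀ t : ℝ, HasDerivAt σ (-1) t := by
    intro t
    simpa using (HasDerivAt.const_sub (2 * t₀) (hasDerivAt_id t))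
  have hf' : ∀ t : ℝ, HasDerivAt f (abcField (f t)) t := by
    intro t
    exact ((h t).1.prodMk ((h t).2.1.prodMk (h t).2.2))
  have hg' : ∀ t : ℝ, HasDerivAt g (abcField (g t)) t := by
    intro t
    have hx' : HasDerivAt (fun t => -x (σ t))
        (-((Real.sin (z (σ t)) + Real.cos (y (σ t))) * (-1))) t :=
      (((h (σ t)).1.comp t (hσ' t))).neg
    have hy' : HasDerivAt (fun t => y (σ t))
        ((Real.sin (x (σ t)) + Real.cos (z (σ t))) * (-1)) t :=
      (h (σ t)).2.1.comp t (hσ' t)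
    have hz' : HasDerivAt (fun t => π - z (σ t))
        (-((Real.sin (y (σ t)) + Real.cos (x (σ t))) * (-1))) t :=
      HasDerivAt.const_sub π ((h (σ t)).2.2.comp t (hσ' t))
    have := (hx'.prodMk (hy'.prodMk hz'))
    convert this using 1
    simp only [abcField, hg, Prod.mk.injEq]
    refine ⟨?_, ?_, ?_⟩
    · rw [Real.sin_pi_sub]; ring
    · rw [Real.sin_neg, Real.cos_pi_sub]; ring
    · rw [Real.cos_neg]; ring
  have heq : f t₀ = g t₀ := by
    have hσt₀ : σ t₀ = t₀ := by simp [hσ]; ring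
    simp only [hf, hg, hσt₀, hx, hz, Prod.mk.injEq]
    constructor
    · ring
    constructor
    · trivial
    · ring
  intro t
  have hmem : t₀ ∈ Ioo (min t t₀ - 1) (max t t₀ + 1) := by
    constructor
    · have := min_le_right t t₀; linarith
    · have := le_max_right t t₀; linarith
  have htmem : t ∈ Ioo (min t t₀ - 1) (max t t₀ + 1) := by
    constructor
    · have := min_le_left t t₀; linarith
    · have := le_max_left t t₀; linarith
  have huniq := ODE_solution_unique_of_mem_Ioo (v := fun _ => abcField)
    (s := fun _ => (univ : Set (ℝ × ℝ × ℝ))) (K := 2)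
    (fun _ _ => abcField_lip.lipschitzOnWith) hmem
    (fun t _ => ⟨hf' t, mem_univ _⟩) (fun t _ => ⟨hg' t, mem_univ _⟩) heq
  have hft := huniq htmem
  simp only [hf, hg, Prod.mk.injEq] at hft
  obtain ⟨e1, e2, e3⟩ := hft
  have hst : σ t = 2 * t₀ - t := rfl
  rw [← hst]
  exact ⟨by linarith, e2.symm, by linarith⟩
end

section
/- Let X = (x, y, z) : ℝ → ℝ³ be a solution of the 1-1-1 ABC flow system with X(0) = (-π/2, 0, a) for some a ∈ ℝ, and suppose there is t₀ > 0 with x(t₀) = 0 and z(t₀) = π/2. Then X(t + 4t₀) = X(t) + (2π, 0, 0) for every t ∈ ℝ. -/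
open Real Set Filter

noncomputable def abcV : ℝ × ℝ × ℝ → ℝ × ℝ × ℝ :=
  fun p => (Real.sin p.2.2 + Real.cos p.2.1, Real.sin p.1 + Real.cos p.2.2,
    Real.sin p.2.1 + Real.cos p.1)

lemma lipschitz_sin : LipschitzWith 1 Real.sin := by
  apply lipschitzWith_of_nnnorm_deriv_le Real.differentiable_sin
  intro x
  rw [Real.deriv_sin]
  simp [← NNReal.coe_le_coe, Real.norm_eq_abs, abs_cos_le_one]

lemma lipschitz_cos : LipschitzWith 1 Real.cos := by
  apply lipschitzWith_of_nnnorm_deriv_le Real.differentiable_cos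
  intro x
  rw [Real.deriv_cos]
  simp [← NNReal.coe_le_coe, Real.norm_eq_abs, abs_sin_le_one]

lemma abcV_lipschitz : LipschitzWith 6 abcV := by
  have h1 : LipschitzWith 1 (fun p : ℝ × ℝ × ℝ => p.1) := LipschitzWith.prod_fst
  have h2 : LipschitzWith 1 (fun p : ℝ × ℝ × ℝ => p.2.1) :=
    LipschitzWith.prod_fst.comp LipschitzWith.prod_snd |>.weaken (by norm_num)
  have h3 : LipschitzWith 1 (fun p : ℝ × ℝ × ℝ => p.2.2) :=
    LipschitzWith.prod_snd.comp LipschitzWith.prod_snd |>.weaken (by norm_num)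
  have c1 : LipschitzWith 2 (fun p : ℝ × ℝ × ℝ => Real.sin p.2.2 + Real.cos p.2.1) := by
    have := (lipschitz_sin.comp h3).add (lipschitz_cos.comp h2)
    simpa using this.weaken (by norm_num)
  have c2 : LipschitzWith 2 (fun p : ℝ × ℝ × ℝ => Real.sin p.1 + Real.cos p.2.2) := by
    have := (lipschitz_sin.comp h1).add (lipschitz_cos.comp h3)
    simpa using this.weaken (by norm_num)
  have c3 : LipschitzWith 2 (fun p : ℝ × ℝ × ℝ => Real.sin p.2.1 + Real.cos p.1) := by
    have := (lipschitz_sin.comp h2).add (lipschitz_cos.comp h1)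
    simpa using this.weaken (by norm_num)
  exact (c1.prodMk (c2.prodMk c3)).weaken (by norm_num)

lemma sin_neg_pi_sub (u : ℝ) : Real.sin (-π - u) = Real.sin u := by
  simp [Real.sin_add, Real.sin_neg, show -π - u = -(π + u) by ring]

lemma cos_neg_pi_sub (u : ℝ) : Real.cos (-π - u) = -Real.cos u := by
  simp [Real.cos_add, show -π - u = -(π + u) by ring]

lemma abc_eq (x y z x' y' z' : ℝ → ℝ) (h : IsABCSol x y z) (h' : IsABCSol x' y' z')
    (s : ℝ) (hxs : x s = x' s) (hys : y s = y' s) (hzs : z s = z' s) :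
    ∀ t, x t = x' t ∧ y t = y' t ∧ z t = z' t := by
  set f : ℝ → ℝ × ℝ × ℝ := fun t => (x t, y t, z t) with hf_def
  set g : ℝ → ℝ × ℝ × ℝ := fun t => (x' t, y' t, z' t) with hg_def
  have hf : ∀ t, HasDerivAt f (abcV (f t)) t := fun t =>
    ((h t).1.prodMk ((h t).2.1.prodMk (h t).2.2))
  have hg : ∀ t, HasDerivAt g (abcV (g t)) t := fun t =>
    ((h' t).1.prodMk ((h' t).2.1.prodMk (h' t).2.2))
  have key : ∀ t, f t = g t := by
    intro t
    have hmem : s ∈ Ioo (min s t - 1) (max s t + 1) :=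
      ⟨by linarith [min_le_left s t], by linarith [le_max_left s t]⟩
    have := ODE_solution_unique_of_mem_Icc (v := fun _ => abcV)
      (s := fun _ => (univ : Set (ℝ × ℝ × ℝ)))
      (fun _ _ => abcV_lipschitz.lipschitzOnWith) hmem
      (Differentiable.continuous fun u => (hf u).differentiableAt).continuousOn
      (fun u _ => hf u) (fun _ _ => trivial)
      (Differentiable.continuous fun u => (hg u).differentiableAt).continuousOn
      (fun u _ => hg u) (fun _ _ => trivial)
      (by simp [hf_def, hg_def, hxs, hys, hzs])
    exact this ⟨by linarith [min_le_right s t], by linarith [le_max_right s t]⟩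
  intro t
  have := key t
  simpa [hf_def, hg_def, Prod.ext_iff] using this

theorem stmt17 (x y z : ℝ → ℝ) (h : IsABCSol x y z) (a : ℝ)
    (hx0 : x 0 = -(π / 2)) (hy0 : y 0 = 0) (hz0 : z 0 = a)
    (t₀ : ℝ) (ht₀ : 0 < t₀) (hx : x t₀ = 0) (hz : z t₀ = π / 2) :
    ∀ t : ℝ, x (t + 4 * t₀) = x t + 2 * π ∧ y (t + 4 * t₀) = y t ∧
      z (t + 4 * t₀) = z t := by
  -- first reflected solution, about t = 0
  have hsol1 : IsABCSol (fun t => -π - x (-t)) (fun t => -(y (-t))) (fun t => z (-t)) := by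
    intro t
    have hneg : HasDerivAt (fun u : ℝ => -u) (-1 : ℝ) t := hasDerivAt_neg t
    obtain ⟨hx', hy', hz'⟩ := h (-t)
    refine ⟨?_, ?_, ?_⟩
    · have := (hx'.comp t hneg).const_sub (-π)
      convert this using 1
      · rfl
      · rfl
      · rfl
      simp only [Real.cos_neg]
      try ring
    · have := (hy'.comp t hneg).neg
      convert this using 1
      · rfl
      · rfl
      · rfl
      simp only [sin_neg_pi_sub]
      try ring
    · have := hz'.comp t hneg
      convert this using 1
      · rfl
      · rfl
      · rfl
      simp only [cos_neg_pi_sub, Real.sin_neg]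
      try ring
  -- second reflected solution, about t = t₀
  have hsol2 : IsABCSol (fun t => -(x (2 * t₀ - t))) (fun t => y (2 * t₀ - t))
      (fun t => π - z (2 * t₀ - t)) := by
    intro t
    have hneg : HasDerivAt (fun u : ℝ => 2 * t₀ - u) (-1 : ℝ) t := by
      simpa using (hasDerivAt_id t).const_sub (2 * t₀)
    obtain ⟨hx', hy', hz'⟩ := h (2 * t₀ - t)
    refine ⟨?_, ?_, ?_⟩
    · have := (hx'.comp t hneg).neg
      convert this using 1
      · rfl
      · rfl
      · rfl
      simp only [Real.sin_pi_sub, Real.cos_neg]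
      try ring
    · have := hy'.comp t hneg
      convert this using 1
      · rfl
      · rfl
      · rfl
      simp only [Real.sin_neg, Real.cos_pi_sub]
      try ring
    · have := (hz'.comp t hneg).const_sub π
      convert this using 1
      · rfl
      · rfl
      · rfl
      simp only [Real.cos_neg, Real.sin_neg]
      try ring
  have A := abc_eq x y z _ _ _ h hsol1 0
    (by simp [hx0]; ring) (by simp [hy0]) (by simp)
  have B := abc_eq x y z _ _ _ h hsol2 t₀
    (by rw [show 2 * t₀ - t₀ = t₀ by ring, hx]; norm_num)
    (by rw [show 2 * t₀ - t₀ = t₀ by ring])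
    (by rw [show 2 * t₀ - t₀ = t₀ by ring, hz]; ring)
  have step : ∀ t, x (t + 2 * t₀) = π + x t ∧ y (t + 2 * t₀) = -(y t) ∧
      z (t + 2 * t₀) = π - z t := by
    intro t
    obtain ⟨hB1, hB2, hB3⟩ := B (t + 2 * t₀)
    obtain ⟨hA1, hA2, hA3⟩ := A (-t)
    rw [show (2 * t₀ - (t + 2 * t₀)) = -t by ring] at hB1 hB2 hB3
    rw [neg_neg] at hA1 hA2 hA3
    refine ⟨?_, ?_, ?_⟩
    · rw [hB1, hA1]; try ring
    · rw [hB2, hA2]; try ring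
    · rw [hB3, hA3]; try ring
  intro t
  obtain ⟨h1, h2, h3⟩ := step (t + 2 * t₀)
  obtain ⟨g1, g2, g3⟩ := step t
  rw [show t + 2 * t₀ + 2 * t₀ = t + 4 * t₀ by ring] at h1 h2 h3
  exact ⟨by rw [h1, g1]; try ring, by rw [h2, g2]; try ring, by rw [h3, g3]; try ring⟩
end
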